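/- arXiv:2301.08211 — 2 statements merged into one kernel-verified Lean document; each statement's English description precedes it below -/
import Mathlib

section
/- The identity ∑_{n=1}^∞ n·cosh(ny)/sinh³(ny) = ∑_{n=1}^∞ n²/sinh²(ny) holds for every real y > 0. -/
open Real

lemma hs1 {r : ℝ} (hr : |r| < 1) :
    HasSum (fun m : ℕ ↦ ((m : ℝ) + 1) * r ^ (m + 1)) (r / (1 - r) ^ 2) := by
  have hr' : ‖r‖ < 1 := by simpa [Real.norm_eq_abs] using hr
  have h := (hasSum_choose_mul_geometric_of_norm_lt_one (𝕜 := ℝ) 1 hr').mul_left r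
  have e1 : (fun m : ℕ ↦ ((m : ℝ) + 1) * r ^ (m + 1))
      = fun m : ℕ ↦ r * (((m + 1).choose 1 : ℕ) * r ^ m) := by
    funext m; simp [Nat.choose_one_right, pow_succ]; ring
  rw [e1, show r / (1 - r) ^ 2 = r * (1 / (1 - r) ^ (1 + 1)) by ring]
  exact h

lemma hs2 {r : ℝ} (hr : |r| < 1) :
    HasSum (fun m : ℕ ↦ ((m : ℝ) + 1) ^ 2 * r ^ (m + 1)) (r * (1 + r) / (1 - r) ^ 3) := by
  have hr' : ‖r‖ < 1 := by simpa [Real.norm_eq_abs] using hr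
  have h2 := (hasSum_choose_mul_geometric_of_norm_lt_one (𝕜 := ℝ) 2 hr').mul_left 2
  have h1 := hasSum_choose_mul_geometric_of_norm_lt_one (𝕜 := ℝ) 1 hr'
  have h := (h2.sub h1).mul_left r
  have e1 : (fun m : ℕ ↦ ((m : ℝ) + 1) ^ 2 * r ^ (m + 1))
      = fun m : ℕ ↦ r * (2 * (((m + 2).choose 2 : ℕ) * r ^ m) - ((m + 1).choose 1 : ℕ) * r ^ m) := by
    funext m
    have hc : (((m + 2).choose 2 : ℕ) : ℝ) = (m + 1) * (m + 2) / 2 := by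
      rw [Nat.cast_choose_two]; push_cast; ring
    simp [hc, Nat.choose_one_right, pow_succ]; ring
  have hne : (1 : ℝ) - r ≠ 0 := by
    rw [abs_lt] at hr; intro h0; linarith [hr.2]
  have e2 : r * (1 + r) / (1 - r) ^ 3 = r * (2 * (1 / (1 - r) ^ (2 + 1)) - 1 / (1 - r) ^ (1 + 1)) := by
    field_simp; ring
  rw [e1, e2]
  exact h

lemma exp_term (x : ℝ) (m : ℕ) :
    Real.exp (-(2 * ((m : ℝ) + 1) * x)) = Real.exp (-(2 * x)) ^ (m + 1) := by
  rw [← Real.exp_nat_mul]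
  congr 1
  push_cast
  ring

lemma hsinh (x : ℝ) (hx : 0 < x) :
    HasSum (fun m : ℕ ↦ 4 * ((m : ℝ) + 1) * Real.exp (-(2 * ((m : ℝ) + 1) * x)))
      (1 / Real.sinh x ^ 2) := by
  set r : ℝ := Real.exp (-(2 * x)) with hrdef
  have hr0 : 0 < r := Real.exp_pos _
  have hr1 : r < 1 := by rw [hrdef, Real.exp_lt_one_iff]; linarith
  have hr : |r| < 1 := by rw [abs_of_pos hr0]; exact hr1
  have h := (hs1 hr).mul_left 4
  have e1 : (fun m : ℕ ↦ 4 * ((m : ℝ) + 1) * Real.exp (-(2 * ((m : ℝ) + 1) * x)))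
      = fun m : ℕ ↦ 4 * (((m : ℝ) + 1) * r ^ (m + 1)) := by
    funext m; rw [exp_term]; ring
  have hEn : Real.exp x ≠ 0 := (Real.exp_pos x).ne'
  have hrE : r = (Real.exp x)⁻¹ * (Real.exp x)⁻¹ := by
    rw [hrdef, show -(2*x) = -x + -x by ring, Real.exp_add, Real.exp_neg]
  have hne : (1 : ℝ) - r ≠ 0 := by intro h0; linarith
  have hsx : Real.sinh x = Real.exp x * (1 - r) / 2 := by
    rw [Real.sinh_eq, Real.exp_neg, hrE]
    field_simp
  have hsne : Real.sinh x ≠ 0 := by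
    rw [hsx]
    positivity
  have hrel : r * Real.exp x ^ 2 = 1 := by rw [hrE]; field_simp
  have e2 : 1 / Real.sinh x ^ 2 = 4 * (r / (1 - r) ^ 2) := by
    rw [hsx]
    field_simp
    linear_combination (-4) * hrel
  rw [e1, e2]
  exact h

lemma hcosh (x : ℝ) (hx : 0 < x) :
    HasSum (fun m : ℕ ↦ 4 * ((m : ℝ) + 1) ^ 2 * Real.exp (-(2 * ((m : ℝ) + 1) * x)))
      (Real.cosh x / Real.sinh x ^ 3) := by
  set r : ℝ := Real.exp (-(2 * x)) with hrdef
  have hr0 : 0 < r := Real.exp_pos _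
  have hr1 : r < 1 := by rw [hrdef, Real.exp_lt_one_iff]; linarith
  have hr : |r| < 1 := by rw [abs_of_pos hr0]; exact hr1
  have h := (hs2 hr).mul_left 4
  have e1 : (fun m : ℕ ↦ 4 * ((m : ℝ) + 1) ^ 2 * Real.exp (-(2 * ((m : ℝ) + 1) * x)))
      = fun m : ℕ ↦ 4 * (((m : ℝ) + 1) ^ 2 * r ^ (m + 1)) := by
    funext m; rw [exp_term]; ring
  have hEn : Real.exp x ≠ 0 := (Real.exp_pos x).ne'
  have hrE : r = (Real.exp x)⁻¹ * (Real.exp x)⁻¹ := by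
    rw [hrdef, show -(2*x) = -x + -x by ring, Real.exp_add, Real.exp_neg]
  have hne : (1 : ℝ) - r ≠ 0 := by intro h0; linarith
  have hsx : Real.sinh x = Real.exp x * (1 - r) / 2 := by
    rw [Real.sinh_eq, Real.exp_neg, hrE]
    field_simp
  have hcx : Real.cosh x = Real.exp x * (1 + r) / 2 := by
    rw [Real.cosh_eq, Real.exp_neg, hrE]
    field_simp
  have hrel : r * Real.exp x ^ 2 = 1 := by rw [hrE]; field_simp
  have e2 : Real.cosh x / Real.sinh x ^ 3 = 4 * (r * (1 + r) / (1 - r) ^ 3) := by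
    rw [hsx, hcx]
    field_simp
    linear_combination (-4) * hrel
  rw [e1, e2]
  exact h

lemma exp_term' (y : ℝ) (k : ℕ) :
    Real.exp (-y) ^ (k + 1) = Real.exp (-(((k : ℝ) + 1) * y)) := by
  rw [← Real.exp_nat_mul]
  congr 1
  push_cast
  ring

theorem stmt3 (y : ℝ) (hy : 0 < y) :
    ∑' n : ℕ, ((n + 1 : ℝ) * Real.cosh ((n + 1) * y) / (Real.sinh ((n + 1) * y)) ^ 3)
      = ∑' n : ℕ, ((n + 1 : ℝ) ^ 2 / (Real.sinh ((n + 1) * y)) ^ 2) := by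
  set F : ℕ × ℕ → ℝ := fun p ↦ 4 * ((p.1 : ℝ) + 1) * ((p.2 : ℝ) + 1) ^ 2 *
      Real.exp (-(2 * ((p.1 : ℝ) + 1) * ((p.2 : ℝ) + 1) * y)) with hFdef
  have hA : ∀ n : ℕ, HasSum (fun m ↦ F (n, m))
      ((n + 1 : ℝ) * Real.cosh ((n + 1) * y) / Real.sinh ((n + 1) * y) ^ 3) := by
    intro n
    have hx : 0 < ((n : ℝ) + 1) * y := by positivity
    have h := (hcosh (((n : ℝ) + 1) * y) hx).mul_left ((n : ℝ) + 1)
    have e : (fun m : ℕ ↦ F (n, m)) = fun m : ℕ ↦ ((n : ℝ) + 1) *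
        (4 * ((m : ℝ) + 1) ^ 2 * Real.exp (-(2 * ((m : ℝ) + 1) * (((n : ℝ) + 1) * y)))) := by
      funext m
      simp only [hFdef]
      rw [show -(2 * ((m : ℝ) + 1) * (((n : ℝ) + 1) * y))
          = -(2 * ((n : ℝ) + 1) * ((m : ℝ) + 1) * y) by ring]
      ring
    rw [e, mul_div_assoc]
    exact h
  have hB : ∀ n : ℕ, HasSum (fun m ↦ F (m, n))
      ((n + 1 : ℝ) ^ 2 / Real.sinh ((n + 1) * y) ^ 2) := by
    intro n
    have hx : 0 < ((n : ℝ) + 1) * y := by positivity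
    have h := (hsinh (((n : ℝ) + 1) * y) hx).mul_left (((n : ℝ) + 1) ^ 2)
    have e : (fun m : ℕ ↦ F (m, n)) = fun m : ℕ ↦ ((n : ℝ) + 1) ^ 2 *
        (4 * ((m : ℝ) + 1) * Real.exp (-(2 * ((m : ℝ) + 1) * (((n : ℝ) + 1) * y)))) := by
      funext m
      simp only [hFdef]
      rw [show -(2 * ((m : ℝ) + 1) * (((n : ℝ) + 1) * y))
          = -(2 * ((m : ℝ) + 1) * ((n : ℝ) + 1) * y) by ring]
      ring
    rw [e, show ((n:ℝ)+1)^2 / Real.sinh (((n:ℝ)+1)*y) ^ 2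
        = ((n:ℝ)+1)^2 * (1 / Real.sinh (((n:ℝ)+1)*y) ^ 2) by ring]
    exact h
  -- summability of F
  set t : ℝ := Real.exp (-y) with htdef
  have ht0 : 0 < t := Real.exp_pos _
  have ht : |t| < 1 := by
    rw [abs_of_pos ht0, htdef, Real.exp_lt_one_iff]; linarith
  have hg : Summable (fun n : ℕ ↦ 4 * (((n : ℝ) + 1) * t ^ (n + 1))) :=
    (hs1 ht).summable.mul_left 4
  have hh : Summable (fun m : ℕ ↦ ((m : ℝ) + 1) ^ 2 * t ^ (m + 1)) := (hs2 ht).summable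
  have hgh : Summable (fun p : ℕ × ℕ ↦
      (4 * (((p.1 : ℝ) + 1) * t ^ (p.1 + 1))) * (((p.2 : ℝ) + 1) ^ 2 * t ^ (p.2 + 1))) := by
    apply Summable.mul_of_nonneg hg hh
    · intro n; positivity
    · intro m; positivity
  have hFle : ∀ p : ℕ × ℕ, F p ≤
      (4 * (((p.1 : ℝ) + 1) * t ^ (p.1 + 1))) * (((p.2 : ℝ) + 1) ^ 2 * t ^ (p.2 + 1)) := by
    rintro ⟨n, m⟩
    have h1 : Real.exp (-(2 * ((n : ℝ) + 1) * ((m : ℝ) + 1) * y))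
        ≤ t ^ (n + 1) * t ^ (m + 1) := by
      rw [exp_term', exp_term', ← Real.exp_add, Real.exp_le_exp]
      have hn : (0:ℝ) ≤ (n : ℝ) := Nat.cast_nonneg n
      have hm : (0:ℝ) ≤ (m : ℝ) := Nat.cast_nonneg m
      nlinarith [mul_nonneg (mul_nonneg hn hm) hy.le, mul_nonneg hn hy.le, mul_nonneg hm hy.le]
    calc F (n, m) = 4 * ((n : ℝ) + 1) * ((m : ℝ) + 1) ^ 2 *
          Real.exp (-(2 * ((n : ℝ) + 1) * ((m : ℝ) + 1) * y)) := rfl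
      _ ≤ 4 * ((n : ℝ) + 1) * ((m : ℝ) + 1) ^ 2 * (t ^ (n + 1) * t ^ (m + 1)) := by
          apply mul_le_mul_of_nonneg_left h1
          positivity
      _ = (4 * (((n : ℝ) + 1) * t ^ (n + 1))) * (((m : ℝ) + 1) ^ 2 * t ^ (m + 1)) := by ring
  have hFnonneg : ∀ p : ℕ × ℕ, 0 ≤ F p := by
    rintro ⟨n, m⟩
    simp only [hFdef]
    positivity
  have hFsum : Summable F := Summable.of_nonneg_of_le hFnonneg hFle hgh
  have hFsum' : Summable (fun p : ℕ × ℕ ↦ F (Prod.swap p)) :=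
    ((Equiv.prodComm ℕ ℕ).summable_iff).mpr hFsum
  calc ∑' n : ℕ, ((n + 1 : ℝ) * Real.cosh ((n + 1) * y) / (Real.sinh ((n + 1) * y)) ^ 3)
      = ∑' n : ℕ, ∑' m : ℕ, F (n, m) := by
        refine tsum_congr fun n ↦ ?_
        rw [(hA n).tsum_eq]
    _ = ∑' p : ℕ × ℕ, F p := (hFsum.tsum_prod' fun n ↦ (hA n).summable).symm
    _ = ∑' p : ℕ × ℕ, F (Prod.swap p) := ((Equiv.prodComm ℕ ℕ).tsum_eq F).symm
    _ = ∑' n : ℕ, ∑' m : ℕ, F (m, n) := hFsum'.tsum_prod' fun n ↦ (hB n).summable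
    _ = ∑' n : ℕ, ((n + 1 : ℝ) ^ 2 / (Real.sinh ((n + 1) * y)) ^ 2) := by
        refine tsum_congr fun n ↦ ?_
        rw [(hB n).tsum_eq]
end

section
/- For every integer n and complex s, the function π/sinh(πs) has a simple pole at s = ni with Laurent expansion π/sinh(πs) = (−1)ⁿ ( 1/(s−ni) + 2 ∑_{k=1}^∞ (−1)ᵏ η(2k) (s−ni)^{2k−1} ) valid for 0 < |s−ni| < 1, where η(s) = ∑_{m=1}^∞ (−1)^{m−1}/m^s is the Dirichlet eta function. -/
open Real Complex Set intervalIntegral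

noncomputable section

namespace S18

lemma denom_sub_ne {a : ℂ} (ha : a ≠ 0) (ha2 : ‖a‖ < 2 * π) (n : ℤ) :
    a - 2 * π * I * n ≠ 0 := by
  rcases eq_or_ne n 0 with rfl | hn
  · simpa using ha
  · intro h
    have h2 : a = 2 * π * I * n := by linear_combination h
    have : ‖a‖ = 2 * π * |(n : ℝ)| := by
      rw [h2]
      simp [norm_mul, abs_of_pos Real.pi_pos]
    have h3 : (1 : ℝ) ≤ |(n : ℝ)| := by
      rw [← Int.cast_abs]
      exact_mod_cast Int.one_le_abs hn
    nlinarith [Real.pi_pos]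

lemma denom_add_ne {a : ℂ} (ha : a ≠ 0) (ha2 : ‖a‖ < 2 * π) (n : ℤ) :
    a + 2 * π * I * n ≠ 0 := by
  have := denom_sub_ne ha ha2 (-n)
  rwa [Int.cast_neg, mul_neg, sub_neg_eq_add] at this

lemma coeff_eq {a : ℂ} (ha : a ≠ 0) (ha2 : ‖a‖ < 2 * π) (n : ℤ) :
    fourierCoeffOn zero_lt_one (fun x : ℝ => Complex.cosh (a * (x - 1/2))) n
      = Complex.sinh (a/2) * (1/(a - 2*π*I*n) + 1/(a + 2*π*I*n)) := by
  have h1 : a - 2*π*I*n ≠ 0 := denom_sub_ne ha ha2 n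
  have h2 : a + 2*π*I*n ≠ 0 := denom_add_ne ha ha2 n
  have h2' : -(a + 2*π*I*n) ≠ 0 := neg_ne_zero.mpr h2
  rw [fourierCoeffOn_eq_integral]
  have expand : ∀ c u v : ℂ, Complex.exp c * ((Complex.exp u + Complex.exp v)/2)
      = Complex.exp (c + u)/2 + Complex.exp (c + v)/2 := by
    intro c u v; rw [Complex.exp_add, Complex.exp_add]; ring
  have key : ∀ x : ℝ, (fourier (-n) (x : AddCircle ((1:ℝ) - 0)) : ℂ) • Complex.cosh (a * (x - 1/2))
      = Complex.exp (-(a/2)) * Complex.exp ((a - 2*π*I*n) * x) / 2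
        + Complex.exp (a/2) * Complex.exp (-(a + 2*π*I*n) * x) / 2 := by
    intro x
    rw [smul_eq_mul, fourier_coe_apply]
    simp only [Complex.cosh]
    rw [expand]
    have e1 : 2 * (π:ℂ) * Complex.I * ((-n : ℤ) : ℂ) * (x:ℂ) / (((1:ℝ) - 0 : ℝ) : ℂ) + a * ((x:ℂ) - 1/2)
        = -(a/2) + (a - 2*π*I*n) * (x:ℂ) := by push_cast; ring
    have e2 : 2 * (π:ℂ) * Complex.I * ((-n : ℤ) : ℂ) * (x:ℂ) / (((1:ℝ) - 0 : ℝ) : ℂ) + -(a * ((x:ℂ) - 1/2))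
        = a/2 + -(a + 2*π*I*n) * (x:ℂ) := by push_cast; ring
    rw [e1, e2, Complex.exp_add, Complex.exp_add]
  simp_rw [key]
  have hInt1 : IntervalIntegrable (fun x : ℝ => Complex.exp (-(a/2)) * Complex.exp ((a - 2*π*I*n) * x) / 2)
      MeasureTheory.volume 0 1 :=
    (((continuous_const.mul ((Complex.continuous_exp).comp
      (continuous_const.mul Complex.continuous_ofReal))).div_const 2).intervalIntegrable 0 1)
  have hInt2 : IntervalIntegrable (fun x : ℝ => Complex.exp (a/2) * Complex.exp (-(a + 2*π*I*n) * x) / 2)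
      MeasureTheory.volume 0 1 :=
    (((continuous_const.mul ((Complex.continuous_exp).comp
      (continuous_const.mul Complex.continuous_ofReal))).div_const 2).intervalIntegrable 0 1)
  rw [intervalIntegral.integral_add hInt1 hInt2, intervalIntegral.integral_div,
    intervalIntegral.integral_div, intervalIntegral.integral_const_mul,
    intervalIntegral.integral_const_mul, integral_exp_mul_complex h1, integral_exp_mul_complex h2']
  have hexp : Complex.exp (2*π*I*n) = 1 := by
    have := Complex.exp_int_mul_two_pi_mul_I n
    rw [show ((n:ℂ) * (2*π*I)) = 2*π*I*n by ring] at this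
    exact this
  have hexp' : Complex.exp (-(2*π*I*n)) = 1 := by
    rw [Complex.exp_neg, hexp, inv_one]
  simp only [Complex.ofReal_one, Complex.ofReal_zero, mul_one, mul_zero, Complex.exp_zero]
  have e1 : Complex.exp (a - 2*π*I*n) = Complex.exp a := by
    rw [sub_eq_add_neg, Complex.exp_add, hexp', mul_one]
  have e2 : Complex.exp (-(a + 2*π*I*n)) = Complex.exp (-a) := by
    rw [neg_add, Complex.exp_add, hexp', mul_one]
  rw [e1, e2]
  simp only [Complex.sinh]
  have E1 : Complex.exp (-(a/2)) * Complex.exp a = Complex.exp (a/2) := by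
    rw [← Complex.exp_add]; ring_nf
  have E2 : Complex.exp (a/2) * Complex.exp (-a) = Complex.exp (-(a/2)) := by
    rw [← Complex.exp_add]; ring_nf
  have L1 : Complex.exp (-(a/2)) * ((Complex.exp a - 1) / (a - 2*π*I*n))
      = (Complex.exp (a/2) - Complex.exp (-(a/2))) / (a - 2*π*I*n) := by
    rw [← mul_div_assoc]
    congr 1
    linear_combination E1
  have L2 : Complex.exp (a/2) * ((Complex.exp (-a) - 1) / (-(a + 2*π*I*n)))
      = (Complex.exp (a/2) - Complex.exp (-(a/2))) / (a + 2*π*I*n) := by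
    rw [← mul_div_assoc,
      show Complex.exp (a/2) * (Complex.exp (-a) - 1)
        = -(Complex.exp (a/2) - Complex.exp (-(a/2))) from by linear_combination E2,
      neg_div_neg_eq]
  rw [L1, L2, show ((1:ℝ)/(1-0)) = 1 from by norm_num, one_smul]
  ring

lemma sq_denom_ne {a : ℂ} (ha : a ≠ 0) (ha2 : ‖a‖ < 2 * π) (n : ℤ) :
    a^2 + (2*(π:ℂ)*n)^2 ≠ 0 := by
  have hd : a^2 + (2*(π:ℂ)*n)^2 = (a - 2*π*I*n)*(a + 2*π*I*n) := by
    linear_combination (4*(π:ℂ)^2*(n:ℂ)^2) * Complex.I_sq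
  rw [hd]
  exact mul_ne_zero (denom_sub_ne ha ha2 n) (denom_add_ne ha ha2 n)

lemma combined_eq {a : ℂ} (ha : a ≠ 0) (ha2 : ‖a‖ < 2 * π) (n : ℤ) :
    1/(a - 2*π*I*n) + 1/(a + 2*π*I*n) = 2*a/(a^2 + (2*(π:ℂ)*n)^2) := by
  have h1 := denom_sub_ne ha ha2 n
  have h2 := denom_add_ne ha ha2 n
  have h3 := sq_denom_ne ha ha2 n
  rw [div_add_div _ _ h1 h2, div_eq_div_iff (mul_ne_zero h1 h2) h3]
  linear_combination (2*a*(π:ℂ)^2*(n:ℂ)^2*4) * Complex.I_sq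

lemma summable_combined {a : ℂ} (ha : a ≠ 0) (ha2 : ‖a‖ < 2 * π) :
    Summable (fun n : ℤ => 2*a/(a^2 + (2*(π:ℂ)*n)^2)) := by
  have hg : Summable (fun n : ℤ => (‖a‖/π^2) * (1/(n:ℝ)^2)) :=
    (Real.summable_one_div_int_pow.mpr one_lt_two).mul_left _
  apply Summable.of_norm_bounded_eventually hg
  rw [Filter.eventually_cofinite]
  apply Set.Finite.subset (Set.finite_Icc (-1 : ℤ) 1)
  intro n hn
  simp only [Set.mem_setOf_eq, not_le] at hn
  by_contra hmem
  simp only [Set.mem_Icc, not_and_or, not_le] at hmem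
  have h2n : 2 ≤ |n| := by
    rcases hmem with h|h
    · rw [abs_of_neg (by omega : n < 0)]; omega
    · rw [abs_of_pos (by omega : 0 < n)]; omega
  apply absurd hn
  push_neg
  have hpos : (0:ℝ) < π := Real.pi_pos
  have hn2 : (2:ℝ) ≤ |(n:ℝ)| := by rw [← Int.cast_abs]; exact_mod_cast h2n
  have hnsq : (4:ℝ) ≤ (n:ℝ)^2 := by rw [← _root_.sq_abs]; nlinarith
  have en : ‖((n:ℤ):ℂ)‖ = |(n:ℝ)| := by
    rw [show ((n:ℤ):ℂ) = (((n:ℝ)):ℂ) from by push_cast; rfl, Complex.norm_real, Real.norm_eq_abs]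
  have epi : ‖((π:ℝ):ℂ)‖ = π := by rw [Complex.norm_real, Real.norm_eq_abs, abs_of_pos hpos]
  have hnormsq : ‖(2*(π:ℂ)*(n:ℂ))^2‖ = (2*π)^2 * (n:ℝ)^2 := by
    rw [norm_pow, norm_mul, norm_mul, en, epi, show ‖(2:ℂ)‖ = 2 from by norm_num,
      show (2*π*|(n:ℝ)|)^2 = (2*π)^2*|(n:ℝ)|^2 from by ring, _root_.sq_abs]
  have hb : ‖(2*(π:ℂ)*n)^2‖ - ‖a^2‖ ≤ ‖a^2 + (2*(π:ℂ)*n)^2‖ := by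
    calc ‖(2*(π:ℂ)*n)^2‖ - ‖a^2‖ = ‖(2*(π:ℂ)*n)^2‖ - ‖-(a^2)‖ := by rw [norm_neg]
      _ ≤ ‖(2*(π:ℂ)*n)^2 - (-(a^2))‖ := norm_sub_norm_le _ _
      _ = ‖a^2 + (2*(π:ℂ)*n)^2‖ := by rw [sub_neg_eq_add, add_comm]
  have hnorma : ‖a^2‖ = ‖a‖^2 := norm_pow a 2
  have haa : ‖a‖^2 < (2*π)^2 := by nlinarith [norm_nonneg a]
  have hlow : 2*π^2*(n:ℝ)^2 ≤ ‖a^2 + (2*(π:ℂ)*n)^2‖ := by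
    rw [hnormsq, hnorma] at hb
    nlinarith [mul_le_mul_of_nonneg_left hnsq (le_of_lt (by positivity : (0:ℝ) < 2*π^2))]
  have hXpos : (0:ℝ) < 2*π^2*(n:ℝ)^2 := by nlinarith
  rw [norm_div]
  calc ‖2*a‖ / ‖a^2 + (2*(π:ℂ)*n)^2‖ ≤ ‖2*a‖ / (2*π^2*(n:ℝ)^2) :=
        div_le_div_of_nonneg_left (norm_nonneg _) hXpos hlow
    _ = ‖a‖/π^2 * (1/(n:ℝ)^2) := by
        rw [norm_mul, show ‖(2:ℂ)‖ = 2 from by norm_num]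
        field_simp

lemma hasSum_one {a : ℂ} (ha : a ≠ 0) (ha2 : ‖a‖ < 2 * π) :
    HasSum (fun n : ℤ => (-1:ℂ)^n * (Complex.sinh (a/2) * (1/(a - 2*π*I*n) + 1/(a + 2*π*I*n)))) 1 := by
  haveI : Fact (0 < (1:ℝ)) := ⟨zero_lt_one⟩
  set f : ℝ → ℂ := fun x : ℝ => Complex.cosh (a * (x - 1/2)) with hf
  have hf01 : f 0 = f 1 := by
    show Complex.cosh (a * (((0:ℝ):ℂ) - 1/2)) = Complex.cosh (a * (((1:ℝ):ℂ) - 1/2))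
    rw [show a * (((0:ℝ):ℂ) - 1/2) = -(a * (((1:ℝ):ℂ) - 1/2)) from by push_cast; ring,
      Complex.cosh_neg]
  have hcontf : Continuous f :=
    Complex.continuous_cosh.comp (continuous_const.mul (Complex.continuous_ofReal.sub continuous_const))
  set F : C(AddCircle (1:ℝ), ℂ) :=
    ⟨AddCircle.liftIco 1 0 f, AddCircle.liftIco_zero_continuous hf01 hcontf.continuousOn⟩ with hF
  have hcoeff : ∀ n : ℤ, fourierCoeff (⇑F) n
      = Complex.sinh (a/2) * (1/(a - 2*π*I*n) + 1/(a + 2*π*I*n)) := by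
    intro n
    show fourierCoeff (AddCircle.liftIco 1 0 f) n = _
    rw [fourierCoeff_liftIco_eq]
    simpa only [zero_add] using coeff_eq ha ha2 n
  have hsum : Summable (fourierCoeff (⇑F)) := by
    apply Summable.congr _ (fun n => (hcoeff n).symm)
    apply Summable.congr ((summable_combined ha ha2).mul_left (Complex.sinh (a/2)))
    intro n
    rw [combined_eq ha ha2 n]
  have key := has_pointwise_sum_fourier_series_of_summable hsum (((1/2 : ℝ)) : AddCircle (1:ℝ))
  have hFx : F (((1/2 : ℝ)) : AddCircle (1:ℝ)) = 1 := by
    show AddCircle.liftIco 1 0 f ((1/2 : ℝ)) = 1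
    rw [AddCircle.liftIco_zero_coe_apply (by norm_num : (1/2:ℝ) ∈ Set.Ico (0:ℝ) 1)]
    show Complex.cosh (a * (((1/2:ℝ):ℂ) - 1/2)) = 1
    rw [show a * (((1/2:ℝ):ℂ) - 1/2) = 0 from by push_cast; ring, Complex.cosh_zero]
  have hfour : ∀ n : ℤ, (fourier n (((1/2 : ℝ)) : AddCircle (1:ℝ)) : ℂ) = (-1)^n := by
    intro n
    rw [fourier_coe_apply]
    rw [show 2*(π:ℂ)*I*(n:ℂ)*((1/2:ℝ):ℂ)/((1:ℝ):ℂ) = (n:ℂ)*((π:ℂ)*I) from by push_cast; ring]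
    rw [Complex.exp_int_mul, Complex.exp_pi_mul_I]
  have h2 : (fun i : ℤ => fourierCoeff (⇑F) i • (fourier i (((1/2 : ℝ)) : AddCircle (1:ℝ)) : ℂ))
      = fun n : ℤ => (-1:ℂ)^n * (Complex.sinh (a/2) * (1/(a - 2*π*I*n) + 1/(a + 2*π*I*n))) := by
    funext i
    rw [smul_eq_mul, hcoeff i, hfour i, mul_comm]
  rw [h2, hFx] at key
  exact key

lemma hasSum_csch {a : ℂ} (ha : a ≠ 0) (ha2 : ‖a‖ < 2 * π) (hs : Complex.sinh (a/2) ≠ 0) :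
    HasSum (fun n : ℤ => (-1:ℂ)^n * (1/(a - 2*π*I*n) + 1/(a + 2*π*I*n)))
      (1/Complex.sinh (a/2)) := by
  have h := (hasSum_one ha ha2).mul_left (Complex.sinh (a/2))⁻¹
  have h2 : (fun n : ℤ => (Complex.sinh (a/2))⁻¹
        * ((-1:ℂ)^n * (Complex.sinh (a/2) * (1/(a - 2*π*I*n) + 1/(a + 2*π*I*n)))))
      = fun n : ℤ => (-1:ℂ)^n * (1/(a - 2*π*I*n) + 1/(a + 2*π*I*n)) := by
    funext n
    field_simp
  rw [h2, mul_one] at h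
  rwa [one_div]

lemma sinh_pi_ne {w : ℂ} (h0 : w ≠ 0) (h1 : ‖w‖ < 1) : Complex.sinh ((π:ℂ)*w) ≠ 0 := by
  intro h
  have hz : Complex.sin ((π:ℂ)*w*I) = 0 := by rw [Complex.sin_mul_I, h, zero_mul]
  rw [Complex.sin_eq_zero_iff] at hz
  obtain ⟨k, hk⟩ := hz
  have hπ : (π:ℂ) ≠ 0 := by exact_mod_cast Real.pi_ne_zero
  have hk2 : (k:ℂ) = w * I := by
    have := hk
    field_simp at this
    exact mul_left_cancel₀ hπ (by linear_combination -(π:ℂ) * this)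
  have hw : w = -(k:ℂ)*I := by
    linear_combination I * hk2 + w * Complex.I_sq
  have hnorm : ‖w‖ = |(k:ℝ)| := by
    rw [hw, norm_mul, norm_neg, Complex.norm_I, mul_one,
      show ((k:ℤ):ℂ) = (((k:ℝ)):ℂ) from by push_cast; rfl, Complex.norm_real, Real.norm_eq_abs]
  rcases eq_or_ne k 0 with rfl | hk0
  · apply h0; rw [hw]; simp
  · have : (1:ℝ) ≤ |(k:ℝ)| := by
      rw [← Int.cast_abs]; exact_mod_cast Int.one_le_abs hk0
    rw [hnorm] at h1; linarith

lemma hasSum_w {w : ℂ} (h0 : w ≠ 0) (h1 : ‖w‖ < 1) :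
    HasSum (fun n : ℤ => (-1:ℂ)^n * (1/(w - I*n) + 1/(w + I*n)))
      (2*π/Complex.sinh ((π:ℂ)*w)) := by
  have hπ : (π:ℂ) ≠ 0 := by exact_mod_cast Real.pi_ne_zero
  have h2π : (2*(π:ℂ)) ≠ 0 := by
    apply mul_ne_zero _ hπ; norm_num
  have ha : (2*(π:ℂ)*w) ≠ 0 := mul_ne_zero h2π h0
  have ha2 : ‖2*(π:ℂ)*w‖ < 2*π := by
    rw [norm_mul, norm_mul, show ‖(2:ℂ)‖ = 2 from by norm_num, Complex.norm_real,
      Real.norm_eq_abs, abs_of_pos Real.pi_pos]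
    nlinarith [Real.pi_pos, norm_nonneg w]
  have hs : Complex.sinh ((2*(π:ℂ)*w)/2) ≠ 0 := by
    rw [show (2*(π:ℂ)*w)/2 = (π:ℂ)*w from by ring]
    exact sinh_pi_ne h0 h1
  have h := (hasSum_csch ha ha2 hs).mul_left (2*(π:ℂ))
  have h2 : (fun n : ℤ => (2*(π:ℂ)) * ((-1:ℂ)^n * (1/(2*(π:ℂ)*w - 2*π*I*n) + 1/(2*(π:ℂ)*w + 2*π*I*n))))
      = fun n : ℤ => (-1:ℂ)^n * (1/(w - I*n) + 1/(w + I*n)) := by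
    funext n
    rw [show 2*(π:ℂ)*w - 2*π*I*n = (2*π) * (w - I*n) from by ring,
      show 2*(π:ℂ)*w + 2*π*I*n = (2*π) * (w + I*n) from by ring,
      one_div ((2*(π:ℂ))*(w - I*(n:ℂ))), one_div ((2*(π:ℂ))*(w + I*(n:ℂ))),
      mul_inv (2*(π:ℂ)) (w - I*(n:ℂ)), mul_inv (2*(π:ℂ)) (w + I*(n:ℂ)),
      show (2*(π:ℂ)) * ((-1:ℂ)^n * ((2*(π:ℂ))⁻¹*(w - I*(n:ℂ))⁻¹ + (2*(π:ℂ))⁻¹*(w + I*(n:ℂ))⁻¹))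
        = ((2*(π:ℂ)) * (2*(π:ℂ))⁻¹) * ((-1:ℂ)^n * ((w - I*(n:ℂ))⁻¹ + (w + I*(n:ℂ))⁻¹)) from by ring,
      mul_inv_cancel₀ h2π, one_mul, ← one_div (w - I*(n:ℂ)), ← one_div (w + I*(n:ℂ))]
  rw [h2, show (2*(π:ℂ)*w)/2 = (π:ℂ)*w from by ring, mul_one_div] at h
  exact h

lemma nat_denom_ne {w : ℂ} (h1 : ‖w‖ < 1) (m : ℕ) :
    (w - I*((m:ℂ)+1) ≠ 0) ∧ (w + I*((m:ℂ)+1) ≠ 0) ∧ (w^2 + ((m:ℂ)+1)^2 ≠ 0) := by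
  have hnI : ‖I*((m:ℂ)+1)‖ = (m:ℝ)+1 := by
    rw [norm_mul, Complex.norm_I, one_mul,
      show ((m:ℂ)+1) = (((m:ℝ)+1 : ℝ):ℂ) from by push_cast; rfl, Complex.norm_real,
      Real.norm_eq_abs, abs_of_pos (by positivity)]
  have hlt : ‖w‖ < ‖I*((m:ℂ)+1)‖ := by
    rw [hnI]
    have hm : (0:ℝ) ≤ (m:ℝ) := Nat.cast_nonneg m
    linarith
  have hsub : w - I*((m:ℂ)+1) ≠ 0 := by
    intro h
    have : w = I*((m:ℂ)+1) := by linear_combination h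
    rw [this] at hlt; exact lt_irrefl _ hlt
  have hadd : w + I*((m:ℂ)+1) ≠ 0 := by
    intro h
    have : w = -(I*((m:ℂ)+1)) := by linear_combination h
    rw [this, norm_neg] at hlt; exact lt_irrefl _ hlt
  refine ⟨hsub, hadd, ?_⟩
  have : w^2 + ((m:ℂ)+1)^2 = (w - I*((m:ℂ)+1)) * (w + I*((m:ℂ)+1)) := by
    linear_combination ((m:ℂ)+1)^2 * Complex.I_sq
  rw [this]
  exact mul_ne_zero hsub hadd

lemma denoms_all {w : ℂ} (h0 : w ≠ 0) (h1 : ‖w‖ < 1) (n : ℕ) :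
    (w - I*(n:ℂ) ≠ 0) ∧ (w + I*(n:ℂ) ≠ 0) := by
  cases n with
  | zero => exact ⟨by simpa using h0, by simpa using h0⟩
  | succ m =>
    have h := nat_denom_ne h1 m
    constructor
    · have := h.1; rwa [show ((m:ℂ)+1) = ((m+1 : ℕ):ℂ) from by push_cast; ring] at this
    · have := h.2.1; rwa [show ((m:ℂ)+1) = ((m+1 : ℕ):ℂ) from by push_cast; ring] at this

lemma hasSum_natform {w : ℂ} (h0 : w ≠ 0) (h1 : ‖w‖ < 1) :
    HasSum (fun m : ℕ => (-1:ℂ)^(m+1) * (w/(w^2+((m:ℂ)+1)^2)))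
      ((π:ℂ)/(2*Complex.sinh ((π:ℂ)*w)) - 1/(2*w)) := by
  have h := (hasSum_w h0 h1).nat_add_neg
  push_cast at h
  have hpair : (fun n : ℕ => (-1:ℂ)^(n:ℤ) * (1/(w - Complex.I*(n:ℂ)) + 1/(w + Complex.I*(n:ℂ)))
        + (-1:ℂ)^(-(n:ℤ)) * (1/(w - Complex.I*(-(n:ℂ))) + 1/(w + Complex.I*(-(n:ℂ)))))
      = fun n : ℕ => 4*(-1:ℂ)^n * (w/(w^2+(n:ℂ)^2)) := by
    funext n
    obtain ⟨d1, d2⟩ := denoms_all h0 h1 n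
    have d3 : w - Complex.I*(-(n:ℂ)) ≠ 0 := by rw [mul_neg, sub_neg_eq_add]; exact d2
    have d4 : w + Complex.I*(-(n:ℂ)) ≠ 0 := by rw [mul_neg, ← sub_eq_add_neg]; exact d1
    have hz1 : ((-1:ℂ))^((n:ℕ):ℤ) = (-1:ℂ)^(n:ℕ) := zpow_natCast _ _
    have hz2 : ((-1:ℂ))^(-((n:ℕ):ℤ)) = (-1:ℂ)^(n:ℕ) := by
      rw [zpow_neg, zpow_natCast, ← inv_pow, inv_neg, inv_one]
    rw [hz1, hz2]
    simp only [mul_neg, sub_neg_eq_add, ← sub_eq_add_neg]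
    have hd : w^2+((n:ℕ):ℂ)^2 = (w - Complex.I*(n:ℂ))*(w + Complex.I*(n:ℂ)) := by
      linear_combination ((n:ℕ):ℂ)^2*Complex.I_sq
    rw [hd]
    field_simp
    ring
  have hval : (2*(π:ℂ)/Complex.sinh ((π:ℂ)*w) + (-1:ℂ)^(0:ℤ) * (1/(w - Complex.I*(0:ℂ)) + 1/(w + Complex.I*(0:ℂ))))
      = 2*(π:ℂ)/Complex.sinh ((π:ℂ)*w) + 2/w := by
    rw [zpow_zero, one_mul, mul_zero, sub_zero, add_zero, ← add_div]
    norm_num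
  rw [hpair, hval] at h
  have hg0 : (4:ℂ)*(-1:ℂ)^(0:ℕ) * (w/(w^2+((0:ℕ):ℂ)^2)) = 4/w := by
    rw [Nat.cast_zero, pow_zero, mul_one]
    rw [show (0:ℂ)^2 = 0 from by norm_num, add_zero, sq]
    field_simp
  have hs2 : HasSum (fun n : ℕ => 4*(-1:ℂ)^(n+1) * (w/(w^2+(((n+1:ℕ)):ℂ)^2)))
      (2*(π:ℂ)/Complex.sinh ((π:ℂ)*w) + 2/w - 4/w) := by
    refine (hasSum_nat_add_iff (f := fun n : ℕ => 4*(-1:ℂ)^n * (w/(w^2+(n:ℂ)^2))) 1).mpr ?_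
    rw [Finset.sum_range_one]
    rw [show (4:ℂ)*(-1:ℂ)^(0:ℕ) * (w/(w^2+((0:ℕ):ℂ)^2)) = 4/w from hg0]
    rw [sub_add_cancel]
    exact h
  have hsh := sinh_pi_ne h0 h1
  have h5 := hs2.div_const 4
  have hfun : (fun n : ℕ => 4*(-1:ℂ)^(n+1) * (w/(w^2+(((n+1:ℕ)):ℂ)^2)) / 4)
      = fun m : ℕ => (-1:ℂ)^(m+1) * (w/(w^2+((m:ℂ)+1)^2)) := by
    funext n
    push_cast
    ring
  have hval2 : (2*(π:ℂ)/Complex.sinh ((π:ℂ)*w) + 2/w - 4/w)/4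
      = (π:ℂ)/(2*Complex.sinh ((π:ℂ)*w)) - 1/(2*w) := by
    field_simp
    ring
  rwa [hfun, hval2] at h5

lemma norm_cast_succ (m : ℕ) : ‖((m:ℂ)+1)‖ = (m:ℝ)+1 := by
  rw [show ((m:ℂ)+1) = (((m:ℝ)+1 : ℝ):ℂ) from by push_cast; ring, Complex.norm_real,
    Real.norm_eq_abs, abs_of_pos (by positivity)]

lemma cast_succ_ne (m : ℕ) : ((m:ℂ)+1) ≠ 0 := by
  rw [show ((m:ℂ)+1) = ((m+1:ℕ):ℂ) from by push_cast; ring]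
  exact_mod_cast Nat.succ_ne_zero m

lemma fiber_hasSum {w : ℂ} (h0 : w ≠ 0) (h1 : ‖w‖ < 1) (m : ℕ) :
    HasSum (fun k : ℕ => (-1:ℂ)^(k+1) * ((-1:ℂ)^m/((m:ℂ)+1)^(2*(k+1)) * w^(2*(k+1)-1)))
      ((-1:ℂ)^(m+1) * (w/(w^2+((m:ℂ)+1)^2))) := by
  set c : ℂ := (m:ℂ)+1 with hc
  have hcne : c ≠ 0 := cast_succ_ne m
  have hcnorm : ‖c‖ = (m:ℝ)+1 := norm_cast_succ m
  have hr : ‖-w^2/c^2‖ < 1 := by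
    rw [norm_div, norm_neg, norm_pow, norm_pow, hcnorm]
    have h2 : (1:ℝ) ≤ ((m:ℝ)+1)^2 := by nlinarith [Nat.cast_nonneg (α := ℝ) m]
    have h3 : ‖w‖^2 < 1 := by nlinarith [norm_nonneg w]
    rw [div_lt_one (by positivity)]
    nlinarith
  have hgeo := (hasSum_geometric_of_norm_lt_one hr).mul_left ((-1:ℂ)^(m+1) * (w/c^2))
  have hsq : w^2 + c^2 ≠ 0 := by
    have := nat_denom_ne h1 m
    exact this.2.2
  have hfun : (fun k : ℕ => ((-1:ℂ)^(m+1) * (w/c^2)) * (-w^2/c^2)^k)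
      = fun k : ℕ => (-1:ℂ)^(k+1) * ((-1:ℂ)^m/c^(2*(k+1)) * w^(2*(k+1)-1)) := by
    funext k
    rw [show 2*(k+1)-1 = 2*k+1 from by omega, show 2*(k+1) = 2*k+2 from by omega]
    rw [div_pow, neg_pow (w^2), ← pow_mul, ← pow_mul]
    rw [pow_add, pow_add, pow_succ]
    field_simp
    ring
  have hval : ((-1:ℂ)^(m+1) * (w/c^2)) * (1 - (-w^2/c^2))⁻¹
      = (-1:ℂ)^(m+1) * (w/(w^2+c^2)) := by
    rw [show (1 - (-w^2/c^2)) = (w^2+c^2)/c^2 from by field_simp; ring]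
    field_simp
  rw [hfun, hval] at hgeo
  exact hgeo

set_option maxHeartbeats 1000000 in
lemma summable_G {w : ℂ} (h1 : ‖w‖ < 1) :
    Summable (fun p : ℕ × ℕ =>
      (-1:ℂ)^(p.1+1) * ((-1:ℂ)^p.2/((p.2:ℂ)+1)^(2*(p.1+1)) * w^(2*(p.1+1)-1))) := by
  have hwsq : ‖w‖^2 < 1 := by nlinarith [norm_nonneg w]
  have h1s : Summable (fun k : ℕ => ‖w‖ * (‖w‖^2)^k) :=
    (summable_geometric_of_lt_one (by positivity) hwsq).mul_left _
  have h2s : Summable (fun m : ℕ => 1/((m:ℝ)+1)^2) := by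
    have h := Real.summable_one_div_nat_pow.mpr (by norm_num : 1 < 2)
    have h' := (summable_nat_add_iff 1).mpr h
    apply h'.congr
    intro m
    push_cast
    ring
  have hprod : Summable (fun p : ℕ × ℕ => (‖w‖ * (‖w‖^2)^p.1) * (1/((p.2:ℝ)+1)^2)) :=
    h1s.mul_of_nonneg h2s (fun k => by positivity) (fun m => by positivity)
  apply Summable.of_norm_bounded hprod
  rintro ⟨k, m⟩
  simp only
  rw [norm_mul, norm_mul, norm_div, norm_pow, norm_pow, norm_pow, norm_pow]
  rw [norm_neg, norm_one, one_pow, one_pow, norm_cast_succ, one_mul]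
  rw [show 2*(k+1)-1 = 2*k+1 from by omega, show 2*(k+1) = 2*k+2 from by omega]
  have hb : (0:ℝ) < (m:ℝ)+1 := by positivity
  have hb1 : (1:ℝ) ≤ (m:ℝ)+1 := by nlinarith [Nat.cast_nonneg (α := ℝ) m]
  have hple : ((m:ℝ)+1)^2 ≤ ((m:ℝ)+1)^(2*k+2) := pow_le_pow_right₀ hb1 (by omega)
  have hd : 1/(((m:ℝ)+1)^(2*k+2)) ≤ 1/(((m:ℝ)+1)^2) :=
    one_div_le_one_div_of_le (by positivity) hple
  have hw1 : ‖w‖^(2*k+1) = ‖w‖ * (‖w‖^2)^k := by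
    rw [← pow_mul]; ring
  calc 1/((m:ℝ)+1)^(2*k+2) * ‖w‖^(2*k+1)
      ≤ 1/((m:ℝ)+1)^2 * ‖w‖^(2*k+1) :=
        mul_le_mul_of_nonneg_right hd (by positivity)
    _ = ‖w‖ * (‖w‖^2)^k * (1/((m:ℝ)+1)^2) := by rw [hw1]; ring

lemma tail_eq {w : ℂ} (h0 : w ≠ 0) (h1 : ‖w‖ < 1) :
    ∑' k : ℕ, (-1:ℂ)^(k+1) * ((∑' m : ℕ, (-1:ℂ)^m/((m:ℂ)+1)^(2*(k+1))) * w^(2*(k+1)-1))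
      = (π:ℂ)/(2*Complex.sinh ((π:ℂ)*w)) - 1/(2*w) := by
  set f : ℕ → ℕ → ℂ := fun k m => (-1:ℂ)^(k+1) * ((-1:ℂ)^m/((m:ℂ)+1)^(2*(k+1)) * w^(2*(k+1)-1)) with hf
  have hG : Summable (Function.uncurry f) := summable_G h1
  have hfib : ∀ m : ℕ, HasSum (fun k => f k m) ((-1:ℂ)^(m+1) * (w/(w^2+((m:ℂ)+1)^2))) :=
    fun m => fiber_hasSum h0 h1 m
  have hcomm := Summable.tsum_comm' hG (fun k => hG.prod_factor k) (fun m => (hfib m).summable)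
  have hL : ∑' (m : ℕ) (k : ℕ), f k m = (π:ℂ)/(2*Complex.sinh ((π:ℂ)*w)) - 1/(2*w) := by
    rw [tsum_congr (fun m => (hfib m).tsum_eq)]
    exact (hasSum_natform h0 h1).tsum_eq
  have hR : ∑' (k : ℕ) (m : ℕ), f k m
      = ∑' k : ℕ, (-1:ℂ)^(k+1) * ((∑' m : ℕ, (-1:ℂ)^m/((m:ℂ)+1)^(2*(k+1))) * w^(2*(k+1)-1)) := by
    apply tsum_congr
    intro k
    rw [hf]
    rw [tsum_mul_left, tsum_mul_right]
  rw [← hR, ← hcomm, hL]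

lemma cos_int_pi (n : ℤ) : Complex.cos ((n:ℂ)*(π:ℂ)) = (-1:ℂ)^n := by
  rw [show ((n:ℂ)*(π:ℂ)) = ((((n:ℝ)*π : ℝ)):ℂ) from by push_cast; ring, ← Complex.ofReal_cos,
    show Real.cos ((n:ℝ)*π) = (-1:ℝ)^n from by simpa using Real.cos_add_int_mul_pi 0 n]
  push_cast
  ring

lemma sin_int_pi (n : ℤ) : Complex.sin ((n:ℂ)*(π:ℂ)) = 0 := by
  rw [show ((n:ℂ)*(π:ℂ)) = ((((n:ℝ)*π : ℝ)):ℂ) from by push_cast; ring, ← Complex.ofReal_sin,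
    Real.sin_int_mul_pi n, Complex.ofReal_zero]

end S18

theorem stmt18 (n : ℤ) (s : ℂ) (h0 : 0 < ‖s - n * Complex.I‖)
    (h1 : ‖s - n * Complex.I‖ < 1) :
    (π : ℂ) / Complex.sinh (π * s)
      = (-1) ^ n * (1 / (s - n * Complex.I)
        + 2 * ∑' k : ℕ, (-1) ^ (k + 1)
            * ((∑' m : ℕ, (-1 : ℂ) ^ m / (m + 1) ^ (2 * (k + 1)))
            * (s - n * Complex.I) ^ (2 * (k + 1) - 1))) := by
  set w : ℂ := s - n * Complex.I with hw
  have h0' : w ≠ 0 := norm_pos_iff.mp h0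
  have hsne := S18.sinh_pi_ne h0' h1
  have htail := S18.tail_eq h0' h1
  rw [htail]
  have hper : Complex.sinh ((π:ℂ)*s) = (-1:ℂ)^n * Complex.sinh ((π:ℂ)*w) := by
    rw [show (π:ℂ)*s = (π:ℂ)*w + ((n:ℂ)*(π:ℂ))*Complex.I from by rw [hw]; ring,
      Complex.sinh_add, Complex.cosh_mul_I, Complex.sinh_mul_I,
      S18.cos_int_pi n, S18.sin_int_pi n]
    ring
  rw [hper]
  have hneg : ((-1:ℂ)^n) * ((-1:ℂ)^n) = 1 := by
    rw [← zpow_add₀ (by norm_num : (-1:ℂ) ≠ 0), show n+n = 2*n from by ring, zpow_mul]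
    norm_num
  have hpow : ((-1:ℂ)^n) ≠ 0 := zpow_ne_zero n (by norm_num)
  have hrhs : 1/w + 2*((π:ℂ)/(2*Complex.sinh ((π:ℂ)*w)) - 1/(2*w))
      = (π:ℂ)/Complex.sinh ((π:ℂ)*w) := by
    field_simp
    ring
  rw [hrhs]
  rw [div_eq_iff (mul_ne_zero hpow hsne), mul_comm ((-1:ℂ)^n) ((π:ℂ)/Complex.sinh ((π:ℂ)*w)),
    show (π:ℂ)/Complex.sinh ((π:ℂ)*w) * (-1:ℂ)^n * ((-1:ℂ)^n * Complex.sinh ((π:ℂ)*w))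
      = ((-1:ℂ)^n*(-1:ℂ)^n) * ((π:ℂ)/Complex.sinh ((π:ℂ)*w) * Complex.sinh ((π:ℂ)*w)) from by ring,
    hneg, one_mul, div_mul_cancel₀ _ hsne]
end
end
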